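/- Let 0 < a < l, Ξ := 1 − a²/l², r₋ > 0, and ω₋ := aΞ/(r₋² + a²). Define W₁(x) := Ξ² − [Ξ a² ω₋² + 2 a ω₋ Ξ a²/l²] x²(1 − x²) − λ̃ Δ_x (1 − x²) with Δ_x := 1 − (a²/l²)x². If λ̃ > Ξ², then there is a constant c > 0 (depending on a, l, r₋) such that dW₁/dx ≥ c·λ̃·x for all x ∈ [0,1]; consequently W₁ is strictly increasing on [0,1] and has exactly one root x₀ in [0,1], and x₀ ∈ (0,1). -/

import Mathlib

set_option maxHeartbeats 2000000 in
/-- For `λ̃ > Ξ²`, the angular potential `W₁` satisfies `dW₁/dx ≥ c λ̃ x` on `[0,1]` for a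
constant `c > 0` depending only on `a, l, r₋`; consequently `W₁` is strictly increasing on
`[0,1]` and has exactly one root there, which lies in `(0,1)`. -/
theorem angular_potential_unique_root (a l rm Ξ ωm : ℝ)
    (ha : 0 < a) (hal : a < l) (hrm : 0 < rm)
    (hΞ : Ξ = 1 - a ^ 2 / l ^ 2) (hω : ωm = a * Ξ / (rm ^ 2 + a ^ 2)) :
    ∃ c : ℝ, 0 < c ∧ ∀ lamt : ℝ, Ξ ^ 2 < lamt →
      ∀ W1 : ℝ → ℝ,
        (W1 = fun x =>
          Ξ ^ 2 - (Ξ * a ^ 2 * ωm ^ 2 + 2 * a * ωm * Ξ * a ^ 2 / l ^ 2) * x ^ 2 * (1 - x ^ 2)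
            - lamt * (1 - (a ^ 2 / l ^ 2) * x ^ 2) * (1 - x ^ 2)) →
        (∀ x ∈ Set.Icc (0 : ℝ) 1, c * lamt * x ≤ deriv W1 x) ∧
        StrictMonoOn W1 (Set.Icc (0 : ℝ) 1) ∧
        (∃! x₀, x₀ ∈ Set.Icc (0 : ℝ) 1 ∧ W1 x₀ = 0) ∧
        (∀ x₀ ∈ Set.Icc (0 : ℝ) 1, W1 x₀ = 0 → x₀ ∈ Set.Ioo (0 : ℝ) 1) := by
  have hl : 0 < l := ha.trans hal
  obtain ⟨μ, hμ⟩ : ∃ μ : ℝ, μ = a ^ 2 / l ^ 2 := ⟨_, rfl⟩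
  have hμ0 : 0 < μ := by rw [hμ]; positivity
  have hμ1 : μ < 1 := by
    rw [hμ, div_lt_one (by positivity)]; nlinarith
  have hΞμ : Ξ = 1 - μ := by rw [hΞ, hμ]
  have hΞ0 : 0 < Ξ := by rw [hΞμ]; linarith
  have hω0 : 0 < ωm := by rw [hω]; positivity
  obtain ⟨K, hK⟩ : ∃ K : ℝ, K = Ξ * a ^ 2 * ωm ^ 2 + 2 * a * ωm * Ξ * a ^ 2 / l ^ 2 :=
    ⟨_, rfl⟩
  have hK0 : 0 < K := by rw [hK]; positivity
  -- K < Ξ² (1 + μ)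
  obtain ⟨t, ht⟩ : ∃ t : ℝ, t = a ^ 2 / (rm ^ 2 + a ^ 2) := ⟨_, rfl⟩
  have ht0 : 0 < t := by rw [ht]; positivity
  have ht1 : t < 1 := by
    rw [ht, div_lt_one (by positivity)]; nlinarith
  have hKeq : K = Ξ ^ 3 * t ^ 2 + 2 * Ξ ^ 2 * μ * t := by
    rw [hK, hω, hμ, ht]; field_simp
  have hKlt : K < Ξ ^ 2 * (1 + μ) := by
    rw [hKeq]
    have ht2 : t ^ 2 < 1 := by nlinarith
    have h1 : Ξ ^ 3 * t ^ 2 < Ξ ^ 3 := by nlinarith [pow_pos hΞ0 3]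
    have h2 : 2 * Ξ ^ 2 * μ * t < 2 * Ξ ^ 2 * μ := by
      nlinarith [mul_pos (mul_pos (by norm_num : (0:ℝ) < 2) (pow_pos hΞ0 2)) hμ0]
    nlinarith [pow_pos hΞ0 2]
  obtain ⟨δ, hδ⟩ : ∃ δ : ℝ, δ = Ξ ^ 2 * (1 + μ) - K := ⟨_, rfl⟩
  have hδ0 : 0 < δ := by rw [hδ]; linarith
  obtain ⟨c, hc⟩ : ∃ c : ℝ, c = min (2 * δ / Ξ ^ 2) (2 * Ξ) := ⟨_, rfl⟩
  have hc0 : 0 < c := by rw [hc]; exact lt_min (by positivity) (by positivity)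
  refine ⟨c, hc0, ?_⟩
  intro lamt hlam W1 hW1
  have hlam0 : 0 < lamt := lt_trans (by positivity) hlam
  obtain ⟨A1, hA1⟩ : ∃ A1 : ℝ, A1 = lamt * (1 + μ) - K := ⟨_, rfl⟩
  obtain ⟨A2, hA2⟩ : ∃ A2 : ℝ, A2 = K - lamt * μ := ⟨_, rfl⟩
  have hW1eq : ∀ x, W1 x = (Ξ ^ 2 - lamt) + A1 * x ^ 2 + A2 * x ^ 4 := by
    intro x; rw [hW1]; rw [hA1, hA2, hK, hμ]; ring
  have hW1fun : W1 = fun x => (Ξ ^ 2 - lamt) + A1 * x ^ 2 + A2 * x ^ 4 := funext hW1eq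
  have hD : ∀ x : ℝ, HasDerivAt W1 (2 * A1 * x + 4 * A2 * x ^ 3) x := by
    intro x
    rw [hW1fun]
    have h2 := (hasDerivAt_pow 2 x).const_mul A1
    have h4 := (hasDerivAt_pow 4 x).const_mul A2
    have h := ((hasDerivAt_const x (Ξ ^ 2 - lamt)).add h2).add h4
    refine h.congr_deriv ?_
    push_cast; ring
  have hderiv : ∀ x : ℝ, deriv W1 x = 2 * A1 * x + 4 * A2 * x ^ 3 := fun x => (hD x).deriv
  have hcont : Continuous W1 := by rw [hW1fun]; fun_prop
  have hc1 : c ≤ 2 * δ / Ξ ^ 2 := hc ▸ min_le_left _ _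
  have hc2 : c ≤ 2 * Ξ := hc ▸ min_le_right _ _
  -- key inequality
  have hkey : ∀ x ∈ Set.Icc (0 : ℝ) 1, c * lamt * x ≤ 2 * A1 * x + 4 * A2 * x ^ 3 := by
    rintro x ⟨hx0, hx1⟩
    have hx3 : x ^ 3 ≤ x := by
      calc x ^ 3 ≤ x ^ 1 := pow_le_pow_of_le_one hx0 hx1 (by norm_num)
        _ = x := pow_one x
    have hx30 : 0 ≤ x ^ 3 := by positivity
    rcases le_or_gt 0 A2 with h | h
    · have hA1ge : 2 * δ / Ξ ^ 2 * lamt ≤ 2 * A1 := by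
        rw [div_mul_eq_mul_div, div_le_iff₀ (by positivity)]
        have hKl : K * Ξ ^ 2 ≤ K * lamt := by nlinarith
        rw [hA1, hδ]; nlinarith
      have h1 : c * lamt ≤ 2 * A1 := le_trans (by nlinarith) hA1ge
      nlinarith [mul_le_mul_of_nonneg_right h1 hx0, mul_nonneg h hx30]
    · have hsum : 2 * A1 + 4 * A2 = 2 * lamt * Ξ + 2 * K := by
        rw [hA1, hA2, hΞμ]; ring
      have h1 : c * lamt ≤ 2 * A1 + 4 * A2 := by rw [hsum]; nlinarith
      have h2 : 4 * A2 * x ^ 3 ≥ 4 * A2 * x := by nlinarith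
      nlinarith [mul_le_mul_of_nonneg_right h1 hx0]
  have hmono : StrictMonoOn W1 (Set.Icc (0 : ℝ) 1) := by
    apply strictMonoOn_of_deriv_pos (convex_Icc 0 1) hcont.continuousOn
    rw [interior_Icc]
    rintro x ⟨hx0, hx1⟩
    have := hkey x ⟨le_of_lt hx0, le_of_lt hx1⟩
    rw [hderiv]
    have hpos : 0 < c * lamt * x := mul_pos (mul_pos hc0 hlam0) hx0
    linarith
  have hW10 : W1 0 < 0 := by rw [hW1eq 0]; simp; linarith
  have hW11 : W1 1 = Ξ ^ 2 := by rw [hW1eq 1, hA1, hA2]; ring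
  have hW11p : 0 < W1 1 := by rw [hW11]; positivity
  have hiv := intermediate_value_Icc (by norm_num : (0:ℝ) ≤ 1) hcont.continuousOn
  obtain ⟨x₀, hx₀mem, hx₀⟩ := hiv ⟨le_of_lt hW10, le_of_lt hW11p⟩
  refine ⟨fun x hx => (hkey x hx).trans_eq (hderiv x).symm, hmono, ?_, ?_⟩
  · refine ⟨x₀, ⟨hx₀mem, hx₀⟩, ?_⟩
    rintro y ⟨hy, hy0⟩
    exact hmono.injOn hy hx₀mem (by rw [hy0, hx₀])
  · rintro z hz hz0
    have hzne0 : z ≠ 0 := by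
      rintro rfl; rw [hz0] at hW10; exact lt_irrefl 0 hW10
    have hzne1 : z ≠ 1 := by
      rintro rfl; rw [hz0] at hW11p; exact lt_irrefl 0 hW11p
    exact ⟨hz.1.lt_of_ne (Ne.symm hzne0), hz.2.lt_of_ne hzne1⟩
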